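/- Let V_1, V_2 > 0, let φ_1, φ_2 be independent random variables each uniformly distributed on [0, 2π), let h = V_1 e^{jφ_1} + V_2 e^{jφ_2}, and let γ = γ̄ |h|² / (V_1² + V_2²) with γ̄ > 0. With Δ = 2V_1V_2/(V_1² + V_2²), for every x with γ̄(1−Δ) ≤ x ≤ γ̄(1+Δ), the cumulative distribution function of γ satisfies P(γ ≤ x) = 1/2 − (1/π) arcsin((1 − x/γ̄)/Δ). -/

import Mathlib

open MeasureTheory ProbabilityTheory Real Complex

/-- The uniform distribution on `[0, 2π)`. -/
noncomputable def uniformPhase : Measure ℝ :=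
  (ENNReal.ofReal (2 * Real.pi))⁻¹ • (volume.restrict (Set.Ico 0 (2 * Real.pi)))

lemma twoPi_pos : (0:ℝ) < 2 * Real.pi := by positivity

instance uniformPhase_prob : IsProbabilityMeasure uniformPhase := by
  constructor
  rw [uniformPhase, Measure.smul_apply, Measure.restrict_apply MeasurableSet.univ,
    Set.univ_inter, Real.volume_Ico, smul_eq_mul, sub_zero]
  exact ENNReal.inv_mul_cancel (ENNReal.ofReal_pos.2 twoPi_pos).ne' ENNReal.ofReal_ne_top

lemma arccos_anti {x y : ℝ} (h : x ≤ y) : Real.arccos y ≤ Real.arccos x := by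
  simp only [Real.arccos_eq_pi_div_two_sub_arcsin]
  linarith [Real.monotone_arcsin h]

lemma cosSet_meas (t : ℝ) : MeasurableSet {b : ℝ | Real.cos b ≤ t} :=
  measurableSet_le Real.continuous_cos.measurable measurable_const

lemma cosSet_vol {t : ℝ} (ht1 : -1 ≤ t) (ht2 : t ≤ 1) :
    volume ({b : ℝ | Real.cos b ≤ t} ∩ Set.Ioc 0 (2 * Real.pi)) =
      ENNReal.ofReal (2 * Real.pi - 2 * Real.arccos t) := by
  have hpi := Real.pi_pos
  have hca := Real.cos_arccos ht1 ht2
  have h0 : Real.arccos t ≤ Real.pi := Real.arccos_le_pi t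
  have h0' : 0 ≤ Real.arccos t := Real.arccos_nonneg t
  have hae : ({b : ℝ | Real.cos b ≤ t} ∩ Set.Ioc 0 (2 * Real.pi) : Set ℝ) =ᵐ[volume]
      Set.Icc (Real.arccos t) (2 * Real.pi - Real.arccos t) := by
    have h0m : (volume : Measure ℝ) {(0:ℝ)} = 0 := measure_singleton 0
    filter_upwards [measure_eq_zero_iff_ae_notMem.1 h0m] with b hb
    simp only [Set.mem_singleton_iff] at hb
    simp only [Set.mem_inter_iff, Set.mem_setOf_eq, Set.mem_Ioc, Set.mem_Icc, eq_iff_iff]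
    constructor
    · rintro ⟨hcos, hb0, hb2⟩
      by_cases hbpi : b ≤ Real.pi
      · refine ⟨?_, by linarith⟩
        have := arccos_anti hcos
        rwa [Real.arccos_cos hb0.le hbpi] at this
      · have h1 : Real.cos (2 * Real.pi - b) ≤ t := by rwa [Real.cos_two_pi_sub]
        have := arccos_anti h1
        rw [Real.arccos_cos (by linarith) (by linarith)] at this
        exact ⟨by linarith, by linarith⟩
    · rintro ⟨hb1, hb2⟩
      have hbpos : 0 < b := lt_of_le_of_ne (le_trans h0' hb1) (fun h => hb h.symm)
      refine ⟨?_, hbpos, by linarith⟩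
      by_cases hbpi : b ≤ Real.pi
      · calc Real.cos b ≤ Real.cos (Real.arccos t) :=
              Real.cos_le_cos_of_nonneg_of_le_pi h0' hbpi hb1
          _ = t := hca
      · have : Real.cos (2 * Real.pi - b) ≤ t := by
          calc Real.cos (2 * Real.pi - b) ≤ Real.cos (Real.arccos t) :=
                Real.cos_le_cos_of_nonneg_of_le_pi h0' (by linarith) (by linarith)
            _ = t := hca
        rwa [Real.cos_two_pi_sub] at this
  rw [measure_congr hae, Real.volume_Icc]
  ring_nf

lemma cosSet_shift (t c : ℝ) :
    volume ({b : ℝ | Real.cos b ≤ t} ∩ Set.Ioc c (c + 2 * Real.pi)) =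
      volume ({b : ℝ | Real.cos b ≤ t} ∩ Set.Ioc 0 (2 * Real.pi)) := by
  have hpi := Real.pi_pos
  set S := {b : ℝ | Real.cos b ≤ t} with hS
  have hSm := cosSet_meas t
  set f : ℝ → ℝ := S.indicator (fun _ => (1:ℝ)) with hf
  have hper : Function.Periodic f (2 * Real.pi) := by
    intro x
    simp only [hf, Set.indicator_apply, hS, Set.mem_setOf_eq, Real.cos_add_two_pi]
  have key : ∀ c : ℝ, ∫ x in c..(c + 2 * Real.pi), f x =
      (volume (S ∩ Set.Ioc c (c + 2 * Real.pi))).toReal := by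
    intro c
    rw [intervalIntegral.integral_of_le (by linarith), hf,
      MeasureTheory.integral_indicator hSm, MeasureTheory.setIntegral_const,
      measureReal_def, Measure.restrict_apply hSm, smul_eq_mul, mul_one]
  have hint := hper.intervalIntegral_add_eq c 0
  rw [key c, key 0] at hint
  rw [zero_add] at hint
  have hfin : ∀ c : ℝ, volume (S ∩ Set.Ioc c (c + 2 * Real.pi)) ≠ ⊤ := by
    intro c
    exact ne_top_of_le_ne_top (by rw [Real.volume_Ioc]; exact ENNReal.ofReal_ne_top)
      (measure_mono Set.inter_subset_right)
  exact (ENNReal.toReal_eq_toReal_iff' (hfin c) (by simpa using hfin 0)).1 hint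

lemma slice_vol (t a : ℝ) :
    volume ({b : ℝ | Real.cos (a - b) ≤ t} ∩ Set.Ico 0 (2 * Real.pi)) =
      volume ({b : ℝ | Real.cos b ≤ t} ∩ Set.Ioc 0 (2 * Real.pi)) := by
  have hpre : ({b : ℝ | Real.cos (a - b) ≤ t} ∩ Set.Ico 0 (2 * Real.pi) : Set ℝ) =
      (fun b => a - b) ⁻¹' ({b : ℝ | Real.cos b ≤ t} ∩ Set.Ioc (a - 2 * Real.pi) a) := by
    ext b
    simp only [Set.mem_inter_iff, Set.mem_setOf_eq, Set.mem_Ico, Set.mem_preimage, Set.mem_Ioc]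
    constructor
    · rintro ⟨h1, h2, h3⟩; exact ⟨h1, by linarith, by linarith⟩
    · rintro ⟨h1, h2, h3⟩; exact ⟨h1, by linarith, by linarith⟩
  rw [hpre,
    (Measure.measurePreserving_sub_left volume a).measure_preimage
      (((cosSet_meas t).inter measurableSet_Ioc).nullMeasurableSet)]
  have := cosSet_shift t (a - 2 * Real.pi)
  rw [sub_add_cancel] at this
  exact this

lemma abs_sq_two_wave (V₁ V₂ a b : ℝ) :
    (‖(V₁ : ℂ) * Complex.exp ((a : ℂ) * Complex.I) +
      (V₂ : ℂ) * Complex.exp ((b : ℂ) * Complex.I)‖) ^ 2 =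
      V₁ ^ 2 + V₂ ^ 2 + 2 * V₁ * V₂ * Real.cos (a - b) := by
  rw [Complex.sq_norm, Complex.normSq_apply]
  simp only [Complex.add_re, Complex.add_im, Complex.mul_re, Complex.mul_im,
    Complex.ofReal_re, Complex.ofReal_im, Complex.exp_ofReal_mul_I_re,
    Complex.exp_ofReal_mul_I_im, zero_mul, sub_zero, add_zero, zero_add]
  rw [Real.cos_sub]
  nlinarith [Real.sin_sq_add_cos_sq a, Real.sin_sq_add_cos_sq b]

/-- For the two-wave SNR `γ = γ̄ |V₁ e^{jφ₁} + V₂ e^{jφ₂}|²/(V₁²+V₂²)`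
with independent uniform phases and `Δ = 2V₁V₂/(V₁²+V₂²)`, the CDF of `γ` on
`[γ̄(1−Δ), γ̄(1+Δ)]` is `x ↦ 1/2 − (1/π) arcsin((1 − x/γ̄)/Δ)`. -/
theorem twoWave_snr_cdf {Ω : Type*} [MeasurableSpace Ω] (μ : Measure Ω)
    [IsProbabilityMeasure μ] (V₁ V₂ : ℝ) (hV₁ : 0 < V₁) (hV₂ : 0 < V₂)
    (φ₁ φ₂ : Ω → ℝ) (hφ₁ : Measurable φ₁) (hφ₂ : Measurable φ₂)
    (hindep : IndepFun φ₁ φ₂ μ)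
    (hunif₁ : Measure.map φ₁ μ = uniformPhase)
    (hunif₂ : Measure.map φ₂ μ = uniformPhase)
    (γbar : ℝ) (hγbar : 0 < γbar)
    (γ : Ω → ℝ)
    (hγ_def : ∀ ω, γ ω = γbar *
      (‖(V₁ : ℂ) * Complex.exp ((φ₁ ω : ℂ) * Complex.I) +
        (V₂ : ℂ) * Complex.exp ((φ₂ ω : ℂ) * Complex.I)‖) ^ 2 / (V₁ ^ 2 + V₂ ^ 2))
    (Δ : ℝ) (hΔ : Δ = 2 * V₁ * V₂ / (V₁ ^ 2 + V₂ ^ 2)) :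
    ∀ x : ℝ, γbar * (1 - Δ) ≤ x → x ≤ γbar * (1 + Δ) →
      (μ {ω | γ ω ≤ x}).toReal =
        1 / 2 - (1 / Real.pi) * Real.arcsin ((1 - x / γbar) / Δ) := by
  intro x hx1 hx2
  have hpi := Real.pi_pos
  have hSpos : (0:ℝ) < V₁ ^ 2 + V₂ ^ 2 := by positivity
  have hΔpos : 0 < Δ := by rw [hΔ]; positivity
  set t : ℝ := (x / γbar - 1) / Δ with ht
  have hxg1 : 1 - Δ ≤ x / γbar := by rw [le_div_iff₀ hγbar]; linarith
  have hxg2 : x / γbar ≤ 1 + Δ := by rw [div_le_iff₀ hγbar]; linarith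
  have ht1 : -1 ≤ t := by rw [ht, le_div_iff₀ hΔpos]; linarith
  have ht2 : t ≤ 1 := by rw [ht, div_le_iff₀ hΔpos]; linarith
  -- rewrite the event in terms of the phase difference
  have hA : MeasurableSet {p : ℝ × ℝ | Real.cos (p.1 - p.2) ≤ t} :=
    measurableSet_le
      ((Real.continuous_cos.comp (continuous_fst.sub continuous_snd)).measurable)
      measurable_const
  have hevent : {ω | γ ω ≤ x} =
      (fun ω => (φ₁ ω, φ₂ ω)) ⁻¹' {p : ℝ × ℝ | Real.cos (p.1 - p.2) ≤ t} := by
    ext ω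
    simp only [Set.mem_setOf_eq, Set.mem_preimage]
    rw [hγ_def ω, abs_sq_two_wave]
    set c := Real.cos (φ₁ ω - φ₂ ω) with hc
    have hgam : γbar * (V₁ ^ 2 + V₂ ^ 2 + 2 * V₁ * V₂ * c) / (V₁ ^ 2 + V₂ ^ 2) =
        γbar * (1 + Δ * c) := by
      rw [hΔ]; field_simp
    rw [hgam]
    constructor
    · intro h
      have h2 : (1 + Δ * c) * γbar ≤ x := by linarith
      have h3 : 1 + Δ * c ≤ x / γbar := (le_div_iff₀ hγbar).2 h2
      rw [ht, le_div_iff₀ hΔpos]; linarith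
    · intro h
      rw [ht, le_div_iff₀ hΔpos] at h
      have h3 : 1 + Δ * c ≤ x / γbar := by linarith
      calc γbar * (1 + Δ * c) ≤ γbar * (x / γbar) :=
            mul_le_mul_of_nonneg_left h3 hγbar.le
        _ = x := by field_simp
  rw [hevent, ← Measure.map_apply (hφ₁.prodMk hφ₂) hA,
    (indepFun_iff_map_prod_eq_prod_map_map hφ₁.aemeasurable hφ₂.aemeasurable).1 hindep,
    hunif₁, hunif₂, Measure.prod_apply hA]
  have hslice : ∀ a : ℝ,
      uniformPhase (Prod.mk a ⁻¹' {p : ℝ × ℝ | Real.cos (p.1 - p.2) ≤ t}) =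
        (ENNReal.ofReal (2 * Real.pi))⁻¹ *
          ENNReal.ofReal (2 * Real.pi - 2 * Real.arccos t) := by
    intro a
    have hpm : (Prod.mk a ⁻¹' {p : ℝ × ℝ | Real.cos (p.1 - p.2) ≤ t}) =
        {b : ℝ | Real.cos (a - b) ≤ t} := rfl
    have hmb : MeasurableSet {b : ℝ | Real.cos (a - b) ≤ t} :=
      measurableSet_le
        ((Real.continuous_cos.comp (continuous_const.sub continuous_id)).measurable)
        measurable_const
    rw [hpm, uniformPhase, Measure.smul_apply, Measure.restrict_apply hmb, smul_eq_mul,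
      slice_vol t a, cosSet_vol ht1 ht2]
  rw [lintegral_congr hslice, lintegral_const, measure_univ, mul_one]
  have harc1 : 0 ≤ 2 * Real.pi - 2 * Real.arccos t := by
    have := Real.arccos_le_pi t; linarith
  rw [ENNReal.toReal_mul, ENNReal.toReal_inv, ENNReal.toReal_ofReal twoPi_pos.le,
    ENNReal.toReal_ofReal harc1]
  have hneg : (1 - x / γbar) / Δ = -t := by rw [ht]; ring
  rw [hneg, Real.arcsin_neg, Real.arccos_eq_pi_div_two_sub_arcsin]
  field_simp
  ring
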